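/- Green-type formula for the perturbed operator: if A_B is the self-adjoint operator defined by the Kreĭn resolvent formula R_z^B = R_z + G_z Λ_z^B G_{z̄}*, and ρ_B(R_z^B u) := (π₁*⊕1) Λ_z^B G_{z̄}* u (with π₁ the orthogonal projection onto the closure of ran(τ₁)), then for all u ∈ dom(A) and v ∈ dom(A_B): ⟨u, A_B v⟩_H = ⟨Au, v⟩_H + ⟨τu, ρ_B v⟩. -/

import Mathlib

open ComplexConjugate
noncomputable section

/-- `Rz` is the resolvent `(-A + z)⁻¹` of the (unbounded) operator `A` at `z`. -/
def IsResolventAt {H : Type*} [NormedAddCommGroup H] [InnerProductSpace ℂ H] [CompleteSpace H]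
    (A : H →ₗ.[ℂ] H) (z : ℂ) (Rz : H →L[ℂ] H) : Prop :=
  (∀ u : H, ∃ hu : Rz u ∈ A.domain, z • Rz u - A ⟨Rz u, hu⟩ = u) ∧
    ∀ x : A.domain, Rz (z • (x : H) - A x) = x

/-- The block-diagonal operator `P ⊕ Q` between Hilbertian direct sums. -/
def blockDiag {h1 h2 h1' h2' : Type*}
    [NormedAddCommGroup h1] [InnerProductSpace ℂ h1]
    [NormedAddCommGroup h2] [InnerProductSpace ℂ h2]
    [NormedAddCommGroup h1'] [InnerProductSpace ℂ h1']
    [NormedAddCommGroup h2'] [InnerProductSpace ℂ h2']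
    (P : h1 →L[ℂ] h1') (Q : h2 →L[ℂ] h2') :
    WithLp 2 (h1 × h2) →L[ℂ] WithLp 2 (h1' × h2') :=
  ((WithLp.prodContinuousLinearEquiv 2 ℂ h1' h2').symm.toContinuousLinearMap.comp
      (P.prodMap Q)).comp
    (WithLp.prodContinuousLinearEquiv 2 ℂ h1 h2).toContinuousLinearMap

/-- The pair `(φ₁, φ₂)` as an element of the Hilbertian direct sum. -/
def pairL2 {h1 h2 : Type*}
    [NormedAddCommGroup h1] [InnerProductSpace ℂ h1]
    [NormedAddCommGroup h2] [InnerProductSpace ℂ h2] (φ₁ : h1) (φ₂ : h2) :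
    WithLp 2 (h1 × h2) :=
  (WithLp.prodContinuousLinearEquiv 2 ℂ h1 h2).symm (φ₁, φ₂)

/-- **Green-type formula.** In the abstract Kreĭn setting, with
`ρ_B(R^B_z u) := (π₁* ⊕ 1) Λ_z^B G_{z̄}* u` (`π₁` the orthogonal projection onto the closure of
`ran τ₁`), for all `u ∈ dom A` and `v ∈ dom A_B`:
`⟨u, A_B v⟩ = ⟨A u, v⟩ + ⟨τ u, ρ_B v⟩`. -/
theorem statement_6
    {H h1 h2 h22 : Type*}
    [NormedAddCommGroup H] [InnerProductSpace ℂ H] [CompleteSpace H]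
    [NormedAddCommGroup h1] [InnerProductSpace ℂ h1] [CompleteSpace h1]
    [NormedAddCommGroup h2] [InnerProductSpace ℂ h2] [CompleteSpace h2]
    [NormedAddCommGroup h22] [InnerProductSpace ℂ h22] [CompleteSpace h22]
    (A : H →ₗ.[ℂ] H) (hA : IsSelfAdjoint A)
    (R : ℂ → H →L[ℂ] H) (ρA : Set ℂ)
    (hρA : ρA = {z : ℂ | ∃ Q : H →L[ℂ] H, IsResolventAt A z Q})
    (hρAres : ∀ z ∈ ρA, IsResolventAt A z (R z))
    (hρAconj : ∀ z ∈ ρA, conj z ∈ ρA)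
    (τ₁ : A.domain →ₗ[ℂ] h1) (τ₂ : A.domain →ₗ[ℂ] h2)
    (hτbdd : ∃ C : ℝ, ∀ x : A.domain, ‖τ₁ x‖ + ‖τ₂ x‖ ≤ C * (‖(x : H)‖ + ‖A x‖))
    (hker₂ : Dense {u : H | ∃ hu : u ∈ A.domain, τ₂ ⟨u, hu⟩ = 0})
    (hran₂ : DenseRange τ₂)
    (T : ℂ → H →L[ℂ] WithLp 2 (h1 × h2))
    (hT : ∀ z ∈ ρA, ∀ (u : H) (hu : R z u ∈ A.domain),
      T z u = pairL2 (τ₁ ⟨R z u, hu⟩) (τ₂ ⟨R z u, hu⟩))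
    (G : ℂ → WithLp 2 (h1 × h2) →L[ℂ] H)
    (hG : ∀ z ∈ ρA, G z = (T (conj z)).adjoint)
    (N : ℂ → WithLp 2 (h1 × h2) →L[ℂ] WithLp 2 (h1 × h2))
    (hNext : ∀ z ∈ ρA, ∀ (φ : WithLp 2 (h1 × h2)) (hφ : G z φ ∈ A.domain),
      N z φ = pairL2 (τ₁ ⟨G z φ, hφ⟩) (τ₂ ⟨G z φ, hφ⟩))
    (hNadj : ∀ z ∈ ρA, (N z).adjoint = N (conj z))
    (hNdiff : ∀ z ∈ ρA, ∀ w ∈ ρA,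
      N w - N z = (z - w) • (((G (conj w)).adjoint).comp (G z)))
    (B₀ : h2 →L[ℂ] h22) (B₁ : h1 →L[ℂ] h1) (B₂ : h2 →L[ℂ] h22)
    (hB₁ : IsSelfAdjoint B₁) (hB₀₂ : B₀.comp B₂.adjoint = B₂.comp B₀.adjoint)
    (Minv : ℂ → WithLp 2 (h1 × h22) →L[ℂ] WithLp 2 (h1 × h2))
    (ZB : Set ℂ)
    (hZB : ZB = {z ∈ ρA | ∀ w ∈ ({z, conj z} : Set ℂ),
      (Minv w).comp (blockDiag (1 : h1 →L[ℂ] h1) B₀ - (blockDiag B₁ B₂).comp (N w)) = 1 ∧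
      (blockDiag (1 : h1 →L[ℂ] h1) B₀ - (blockDiag B₁ B₂).comp (N w)).comp (Minv w) = 1})
    (hZBne : ZB.Nonempty)
    (AB : H →ₗ.[ℂ] H) (hAB : IsSelfAdjoint AB)
    (hABres : ∀ z ∈ ZB, IsResolventAt AB z
      (R z + ((G z).comp ((Minv z).comp (blockDiag B₁ B₂))).comp ((G (conj z)).adjoint)))
    (P1 : h1 →L[ℂ] h1) (hP1sa : IsSelfAdjoint P1) (hP1idem : P1.comp P1 = P1)
    (hP1mem : ∀ y : h1, P1 y ∈ closure (Set.range fun x : A.domain => τ₁ x))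
    (hP1fix : ∀ y ∈ closure (Set.range fun x : A.domain => τ₁ x), P1 y = y)
    (ρB : AB.domain →ₗ[ℂ] WithLp 2 (h1 × h2))
    (hρB : ∀ z ∈ ZB, ∀ (u : H)
      (hu : (R z + ((G z).comp ((Minv z).comp (blockDiag B₁ B₂))).comp
        ((G (conj z)).adjoint)) u ∈ AB.domain),
      ρB ⟨(R z + ((G z).comp ((Minv z).comp (blockDiag B₁ B₂))).comp
        ((G (conj z)).adjoint)) u, hu⟩
        = blockDiag P1 (1 : h2 →L[ℂ] h2)
            ((Minv z) ((blockDiag B₁ B₂) ((G (conj z)).adjoint u))))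
    :
    ∀ (u : A.domain) (v : AB.domain),
      (inner ℂ ((u : H)) ((AB v : H)) : ℂ)
        = (inner ℂ ((A u : H)) ((v : H)) : ℂ)
          + (inner ℂ (pairL2 (τ₁ u) (τ₂ u)) (ρB v) : ℂ) := by

  intro u v
  obtain ⟨z, hz⟩ := hZBne
  have hzρ : z ∈ ρA := by rw [hZB] at hz; exact hz.1
  have hzcρ : conj z ∈ ρA := hρAconj z hzρ
  have hdense : Dense (A.domain : Set H) :=
    Dense.mono (fun x hx => hx.1) hker₂
  have hsymm : ∀ a b : A.domain,
      (inner ℂ ((A a : H)) ((b : H)) : ℂ) = inner ℂ ((a : H)) ((A b : H)) := by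
    have h := LinearPMap.adjoint_isFormalAdjoint (T := A) hdense
    rw [LinearPMap.isSelfAdjoint_def.mp hA] at h
    exact h
  -- the resolvent adjoint identity
  have hRadj : ∀ x y : H, (inner ℂ (R (conj z) x) y : ℂ) = inner ℂ x (R z y) := by
    intro x y
    obtain ⟨ha, hax⟩ := (hρAres _ hzcρ).1 x
    obtain ⟨hb, hby⟩ := (hρAres _ hzρ).1 y
    calc (inner ℂ (R (conj z) x) y : ℂ)
        = inner ℂ (R (conj z) x) (z • R z y - (A ⟨R z y, hb⟩ : H)) := by rw [hby]
      _ = z * inner ℂ (R (conj z) x) (R z y)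
            - inner ℂ (R (conj z) x) ((A ⟨R z y, hb⟩ : H)) := by
          rw [inner_sub_right, inner_smul_right]
      _ = z * inner ℂ (R (conj z) x) (R z y)
            - inner ℂ ((A ⟨R (conj z) x, ha⟩ : H)) (R z y) := by
          rw [hsymm ⟨R (conj z) x, ha⟩ ⟨R z y, hb⟩]
      _ = inner ℂ (conj z • R (conj z) x - (A ⟨R (conj z) x, ha⟩ : H)) (R z y) := by
          rw [inner_sub_left, inner_smul_left, Complex.conj_conj]
      _ = inner ℂ x (R z y) := by rw [hax]
  set RB := R z + ((G z).comp ((Minv z).comp (blockDiag B₁ B₂))).comp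
      ((G (conj z)).adjoint) with hRBdef
  have hres := hABres z hz
  set f : H := z • (v : H) - AB v with hf
  have hvf : RB f = (v : H) := hres.2 v
  have hABv : (AB v : H) = z • (v : H) - f := by rw [hf]; abel
  set g : H := conj z • (u : H) - A u with hg
  have hug : R (conj z) g = (u : H) := (hρAres _ hzcρ).2 u
  set φ : WithLp 2 (h1 × h2) :=
    (Minv z) ((blockDiag B₁ B₂) ((G (conj z)).adjoint f)) with hφ
  have hρBv : ρB v = blockDiag P1 (1 : h2 →L[ℂ] h2) φ := by
    have hu2 : RB f ∈ AB.domain := hvf ▸ v.2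
    have h := hρB z hz f hu2
    rwa [show (⟨RB f, hu2⟩ : AB.domain) = v from Subtype.ext hvf] at h
  have hTg : T (conj z) g = pairL2 (τ₁ u) (τ₂ u) := by
    have hu1 : R (conj z) g ∈ A.domain := hug ▸ u.2
    have h := hT (conj z) hzcρ g hu1
    rwa [show (⟨R (conj z) g, hu1⟩ : A.domain) = u from Subtype.ext hug] at h
  have E1 : (inner ℂ ((u : H)) ((AB v : H)) : ℂ)
      = z * inner ℂ ((u : H)) ((v : H)) - inner ℂ ((u : H)) f := by
    rw [hABv, inner_sub_right, inner_smul_right]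
  have E2 : (inner ℂ g ((v : H)) : ℂ)
      = z * inner ℂ ((u : H)) ((v : H)) - inner ℂ ((A u : H)) ((v : H)) := by
    rw [hg, inner_sub_left, inner_smul_left, Complex.conj_conj]
  have E3 : (inner ℂ g ((v : H)) : ℂ)
      = inner ℂ ((u : H)) f + inner ℂ (pairL2 (τ₁ u) (τ₂ u)) φ := by
    rw [← hvf, hRBdef]
    simp only [ContinuousLinearMap.add_apply, ContinuousLinearMap.comp_apply,
      inner_add_right]
    congr 1
    · rw [← hug]; exact (hRadj g f).symm
    · rw [hG z hzρ, ContinuousLinearMap.adjoint_inner_right, hTg, hφ]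
  have E4 : (inner ℂ (pairL2 (τ₁ u) (τ₂ u)) (ρB v) : ℂ)
      = inner ℂ (pairL2 (τ₁ u) (τ₂ u)) φ := by
    rw [hρBv]
    have hfst : (blockDiag P1 (1 : h2 →L[ℂ] h2) φ).ofLp.1 = P1 φ.ofLp.1 := rfl
    have hsnd : (blockDiag P1 (1 : h2 →L[ℂ] h2) φ).ofLp.2 = φ.ofLp.2 := rfl
    rw [WithLp.prod_inner_apply, WithLp.prod_inner_apply, hfst, hsnd]
    have hpfst : (pairL2 (τ₁ u) (τ₂ u)).ofLp.1 = τ₁ u := rfl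
    rw [hpfst]
    have hP1 : (inner ℂ (τ₁ u) (P1 φ.ofLp.1) : ℂ) = inner ℂ (τ₁ u) φ.ofLp.1 := by
      rw [← ContinuousLinearMap.adjoint_inner_left,
        ContinuousLinearMap.isSelfAdjoint_iff'.mp hP1sa,
        hP1fix (τ₁ u) (subset_closure ⟨u, rfl⟩)]
    rw [hP1]
  linear_combination E1 - E2 + E3 - E4
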